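/- Let e = (f_e, a_e) be an idempotent of IS_m ≀_p IS_n, let N_e = {ζ ∈ IS_m ≀_p IS_n : eζ = ζ}, and let R be any R-cross-section of IS_m ≀_p IS_n. Then |N_e ∩ R| = ∏_{x ∈ dom(a_e)} (1 + 2^{|dom(f_e(x))|}). -/

import Mathlib

open scoped Classical

/-- `IS n` is the full inverse symmetric semigroup: all partial bijections of `Fin n`;
multiplication is composition of partial maps (maps acting on the right). -/
abbrev IS (n : ℕ) : Type := PEquiv (Fin n) (Fin n)

noncomputable section
namespace ISW

instance {n : ℕ} : Mul (IS n) := ⟨PEquiv.trans⟩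
instance {n : ℕ} : One (IS n) := ⟨PEquiv.refl _⟩

/-- The domain of a partial bijection. -/
def pdom {n : ℕ} (f : IS n) : Set (Fin n) := {x | (f x).isSome}

/-- The range of a partial bijection. -/
def pran {n : ℕ} (f : IS n) : Set (Fin n) := {y | (f.symm y).isSome}

/-- Green's R-relation on a semigroup (with identity): `u R v` iff `uS = vS`. -/
def GreenR {S : Type*} [Mul S] (u v : S) : Prop :=
  {w | ∃ s, w = u * s} = {w | ∃ s, w = v * s}

/-- Green's L-relation on a semigroup (with identity): `u L v` iff `Su = Sv`. -/
def GreenL {S : Type*} [Mul S] (u v : S) : Prop :=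
  {w | ∃ s, w = s * u} = {w | ∃ s, w = s * v}

/-- An R-cross-section: a subsemigroup containing exactly one element of every
Green R-class. -/
def IsRCrossSection {S : Type*} [Mul S] (T : Set S) : Prop :=
  (∀ a ∈ T, ∀ b ∈ T, a * b ∈ T) ∧ ∀ x : S, ∃! t, t ∈ T ∧ GreenR x t

/-- An L-cross-section: a subsemigroup containing exactly one element of every
Green L-class. -/
def IsLCrossSection {S : Type*} [Mul S] (T : Set S) : Prop :=
  (∀ a ∈ T, ∀ b ∈ T, a * b ∈ T) ∧ ∀ x : S, ∃! t, t ∈ T ∧ GreenL x t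

/-- `φ` realizes a semigroup isomorphism from `T₁` onto `T₂`. -/
def IsSemiIso {S₁ S₂ : Type*} [Mul S₁] [Mul S₂] (T₁ : Set S₁) (T₂ : Set S₂)
    (φ : S₁ → S₂) : Prop :=
  Set.BijOn φ T₁ T₂ ∧ ∀ a ∈ T₁, ∀ b ∈ T₁, φ (a * b) = φ a * φ b

/-- The partial wreath product `IS m ≀_p IS n`: pairs `(f, a)` with `a ∈ IS n` and
`f` a partial map from `Fin n` to `IS m` whose domain equals the domain of `a`. -/
structure PW (m n : ℕ) where
  base : IS n
  fib : Fin n → Option (IS m)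
  dom_eq : ∀ x, (fib x).isSome ↔ (base x).isSome

/-- Multiplication of the partial wreath product: `(f,a)·(g,b) = (f g^a, ab)`. -/
instance {m n : ℕ} : Mul (PW m n) where
  mul u v :=
    { base := u.base * v.base
      fib := fun x => Option.map₂ (· * ·) (u.fib x) ((u.base x).bind v.fib)
      dom_eq := by
        intro x
        show _ ↔ (((u.base x).bind v.base)).isSome
        cases h : u.base x with
        | none =>
          have : u.fib x = none := by
            have := (u.dom_eq x)
            simp [h] at this
            simpa using Option.not_isSome_iff_eq_none.mp (by simp [this])
          simp [h, this, Option.map₂]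
        | some y =>
          have hf : (u.fib x).isSome := (u.dom_eq x).mpr (by simp [h])
          obtain ⟨s, hs⟩ := Option.isSome_iff_exists.mp hf
          cases h2 : v.base y with
          | none =>
            have : v.fib y = none := by
              have := (v.dom_eq y)
              simp [h2] at this
              simpa using Option.not_isSome_iff_eq_none.mp (by simp [this])
            simp [h, h2, hs, this, Option.map₂]
          | some z =>
            have hg : (v.fib y).isSome := (v.dom_eq y).mpr (by simp [h2])
            obtain ⟨t, ht⟩ := Option.isSome_iff_exists.mp hg
            simp [h, h2, hs, ht, Option.map₂] }

/-- The identity of the partial wreath product. -/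
instance {m n : ℕ} : One (PW m n) where
  one :=
    { base := 1
      fib := fun _ => some 1
      dom_eq := by intro x; simp; rfl }

/-- `chainFun L j x`: with `L` listing the elements of a block in increasing order and
`0 ≤ j < |L|` (`j` is the 0-based version of the paper's index), this is the value at `x` of
the chain `a_{i,j}`: the partial bijection with domain everything except `L[j]`,
sending `L[l] ↦ L[l+1]` for `l < j` and fixing all other points. -/
def chainFun {n : ℕ} (L : List (Fin n)) (j : ℕ) (x : Fin n) : Option (Fin n) :=
  if x ∈ L then
    if L.idxOf x = j then none
    else if L.idxOf x < j then L[L.idxOf x + 1]?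
    else some x
  else some x

/-- The generators `a_{i,j}` attached to an ordered decomposition with blocks `B i`. -/
def RGens {n s : ℕ} (B : Fin s → List (Fin n)) : Set (IS n) :=
  {a : IS n | ∃ i : Fin s, ∃ j : ℕ, j < (B i).length ∧ ∀ x, a x = chainFun (B i) j x}

/-- `R(M⃗₁, …, M⃗ₛ)`: the subsemigroup of `IS n` generated by the chains `a_{i,j}`
together with the identity map. -/
def RSec {n s : ℕ} (B : Fin s → List (Fin n)) : Set (IS n) :=
  (Subsemigroup.closure (RGens B ∪ {1}) : Subsemigroup (IS n))

/-- A decomposition of `Fin n` into disjoint nonempty blocks, each block equipped with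
a linear order, recorded by listing the elements of each block in increasing order. -/
structure OrderedPartition (n s : ℕ) where
  B : Fin s → List (Fin n)
  nonempty : ∀ i, B i ≠ []
  nodup : ∀ i, (B i).Nodup
  disjoint : ∀ i j, i ≠ j → ∀ x, x ∈ B i → x ∉ B j
  cover : ∀ x, ∃ i, x ∈ B i

/-- The chain `a_{i,j}` of the block listed by `L`, viewed inside `IS(M_i)`, i.e. embedded
into `IS n` as a partial bijection whose domain is contained in the block: it is defined on
`L` minus `L[j]`, sends `L[l] ↦ L[l+1]` for `l < j` and fixes the other points of `L`. -/
def chainFunB {n : ℕ} (L : List (Fin n)) (j : ℕ) (x : Fin n) : Option (Fin n) :=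
  if x ∈ L then
    if L.idxOf x = j then none
    else if L.idxOf x < j then L[L.idxOf x + 1]?
    else some x
  else none

/-- The generators of `R(M⃗)` inside `IS(M)` (embedded in `IS n`), `M` listed by `L`. -/
def BlockGens {n : ℕ} (L : List (Fin n)) : Set (IS n) :=
  {a : IS n | ∃ j : ℕ, j < L.length ∧ ∀ x, a x = chainFunB L j x}

/-- The identity of `IS(M)` (embedded in `IS n`): the identity map of the block listed by `L`. -/
def idOn {n : ℕ} (L : List (Fin n)) : Set (IS n) :=
  {a : IS n | ∀ x, a x = if x ∈ L then some x else none}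

/-- The R-cross-section `R(M⃗)` of `IS(M)`, embedded into `IS n`, for the block listed by `L`. -/
def RSecBlock {n : ℕ} (L : List (Fin n)) : Set (IS n) :=
  (Subsemigroup.closure (BlockGens L ∪ idOn L) : Subsemigroup (IS n))

/-- The wreath product `R_i ≀_p R(M⃗_i)` where `R(M⃗_i) ⊆ IS(M_i)`, `M_i` listed by `L`,
and `R_i = T ⊆ IS m`, realized inside `PW m n` via the natural embedding
`IS m ≀_p IS(M_i) ⊆ IS m ≀_p IS n`. -/
def WBlock (m n : ℕ) (L : List (Fin n)) (T : Set (IS m)) : Set (PW m n) :=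
  {u : PW m n | u.base ∈ RSecBlock L ∧ ∀ x f, u.fib x = some f → f ∈ T}

/-- The element `e' = (0̄, 1)` of `IS m ≀_p IS n`: the second component is the identity of
`IS n` and the first component sends every point to the empty map `0` of `IS m`. -/
def ezero (m n : ℕ) : PW m n where
  base := 1
  fib := fun _ => some ⊥
  dom_eq := by intro x; simp; rfl


section Aux

variable {m n : ℕ}

lemma IS.mul_apply (a b : IS n) (x : Fin n) : (a * b) x = (a x).bind b := rfl

lemma PW.ext' {u v : PW m n} (h1 : u.base = v.base) (h2 : u.fib = v.fib) : u = v := by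
  cases u; cases v; simp_all

lemma PW.mul_base (u v : PW m n) : (u * v).base = u.base * v.base := rfl

lemma PW.mul_fib (u v : PW m n) (x : Fin n) :
    (u * v).fib x = Option.map₂ (· * ·) (u.fib x) ((u.base x).bind v.fib) := rfl

lemma fib_none_of_base_none {u : PW m n} {x : Fin n} (h : u.base x = none) :
    u.fib x = none := by
  have h2 := u.dom_eq x
  rw [h] at h2
  simp at h2
  exact Option.not_isSome_iff_eq_none.mp (by simp [h2])

lemma fib_some_of_base_some {u : PW m n} {x : Fin n} {y : Fin n} (h : u.base x = some y) :
    ∃ f, u.fib x = some f := by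
  have h2 : (u.fib x).isSome := (u.dom_eq x).mpr (by simp [h])
  exact Option.isSome_iff_exists.mp h2

lemma base_none_of_fib_none {u : PW m n} {x : Fin n} (h : u.fib x = none) :
    u.base x = none := by
  have h2 := u.dom_eq x
  rw [h] at h2
  simp at h2
  exact Option.not_isSome_iff_eq_none.mp (by simp [h2])

lemma base_some_of_fib_some {u : PW m n} {x : Fin n} {f : IS m} (h : u.fib x = some f) :
    ∃ y, u.base x = some y := by
  have h2 : (u.base x).isSome := (u.dom_eq x).mp (by simp [h])
  exact Option.isSome_iff_exists.mp h2

lemma PW.mul_assoc (u v w : PW m n) : u * v * w = u * (v * w) := by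
  apply PW.ext'
  · exact PEquiv.trans_assoc _ _ _
  · funext x
    rcases h1 : u.base x with _ | y
    · have hf := fib_none_of_base_none h1
      simp [PW.mul_fib, PW.mul_base, IS.mul_apply, h1, hf]
    · obtain ⟨a, ha⟩ := fib_some_of_base_some h1
      rcases h2 : v.base y with _ | z
      · have hg := fib_none_of_base_none h2
        simp [PW.mul_fib, PW.mul_base, IS.mul_apply, h1, h2, ha, hg]
      · obtain ⟨b, hb⟩ := fib_some_of_base_some h2
        rcases h3 : w.fib z with _ | c
        · simp [PW.mul_fib, PW.mul_base, IS.mul_apply, h1, h2, ha, hb, h3]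
        · simp only [PW.mul_fib, PW.mul_base, IS.mul_apply, h1, h2, ha, hb, h3,
            Option.bind_some, Option.map₂_some_some, Option.bind_some]
          show some (a * b * c) = some (a * (b * c))
          exact congrArg some (PEquiv.trans_assoc a b c)

lemma PW.mul_one' (u : PW m n) : u * 1 = u := by
  apply PW.ext'
  · exact PEquiv.trans_refl _
  · funext x
    rcases h1 : u.base x with _ | y
    · have hf := fib_none_of_base_none h1
      simp [PW.mul_fib, h1, hf]
    · obtain ⟨a, ha⟩ := fib_some_of_base_some h1
      show Option.map₂ (· * ·) (u.fib x) ((u.base x).bind fun _ => some 1) = u.fib x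
      simp only [h1, ha, Option.bind_some, Option.map₂_some_some]
      exact congrArg some (PEquiv.trans_refl a)

/-- domain finset of a partial bijection -/
def pdomF {m : ℕ} (f : IS m) : Finset (Fin m) := Finset.univ.filter fun w => (f w).isSome

/-- the R-class invariant of an element of the wreath product -/
def Dm {m n : ℕ} (u : PW m n) (x : Fin n) : Option (Finset (Fin m)) := (u.fib x).map pdomF

/-- inverse in the wreath product -/
def pinv {m n : ℕ} (u : PW m n) : PW m n where
  base := u.base.symm
  fib := fun y => (u.base.symm y).bind fun x => (u.fib x).map PEquiv.symm
  dom_eq := by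
    intro y
    rcases h : u.base.symm y with _ | x
    · simp [h]
    · have hb : u.base x = some y := (PEquiv.eq_some_iff u.base).mp h
      obtain ⟨f, hf⟩ := fib_some_of_base_some hb
      simp [h, hf]

lemma pid_of_idem {a : IS n} (ha : a * a = a) {x y : Fin n} (h : a x = some y) : y = x := by
  have h2 : (a * a) x = some y := by rw [ha]; exact h
  have h3 : a y = some y := by
    have hb : (a x).bind a = some y := h2
    rw [h] at hb
    simpa using hb
  have s1 : a.symm y = some y := (PEquiv.eq_some_iff a).mpr h3
  have s2 : a.symm y = some x := (PEquiv.eq_some_iff a).mpr h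
  rw [s1] at s2
  exact Option.some_injective _ s2

lemma pid_trans {f g : IS m} (hf : ∀ w z, f w = some z → z = w)
    (hdom : ∀ w, (g w).isSome → (f w).isSome) : f * g = g := by
  apply PEquiv.ext
  intro w
  show (f w).bind g = g w
  rcases hg : g w with _ | z
  · rcases hfw : f w with _ | z'
    · simp
    · have := hf w z' hfw
      subst this
      simp [hg]
  · have h1 : (f w).isSome := hdom w (by simp [hg])
    obtain ⟨z', hz⟩ := Option.isSome_iff_exists.mp h1
    have := hf w z' hz
    subst this
    simp [hz, hg]

lemma Dm_mul_le {u v : PW m n} {x : Fin n} {A : Finset (Fin m)}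
    (h : Dm (u * v) x = some A) : ∃ B, Dm u x = some B ∧ A ⊆ B := by
  rcases h1 : u.fib x with _ | f
  · exfalso
    simp [Dm, PW.mul_fib, h1] at h
  · refine ⟨pdomF f, by simp [Dm, h1], ?_⟩
    rcases h2 : (u.base x).bind v.fib with _ | g
    · exfalso
      simp [Dm, PW.mul_fib, h1, h2] at h
    · have hA : A = pdomF (f * g) := by
        simp [Dm, PW.mul_fib, h1, h2] at h
        exact h.symm
      subst hA
      intro w hw
      simp only [pdomF, Finset.mem_filter, Finset.mem_univ, true_and] at hw ⊢
      have : ((f w).bind g).isSome := hw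
      rcases hfw : f w with _ | z
      · rw [hfw] at this; simp at this
      · simp [hfw]

lemma pid_self_trans_symm (f : IS m) : ∀ w z, (f * f.symm) w = some z → z = w := by
  intro w z h
  have h' : (f w).bind f.symm = some z := h
  rcases hfw : f w with _ | b
  · rw [hfw] at h'; simp at h'
  · rw [hfw] at h'
    simp at h'
    have h1 : f z = some b := (PEquiv.eq_some_iff f).mp h'
    have s1 : f.symm b = some w := (PEquiv.eq_some_iff f).mpr hfw
    rw [h'] at s1
    exact Option.some_injective _ s1

lemma absorb (u w : PW m n)
    (hle : ∀ x A, Dm w x = some A → ∃ B, Dm u x = some B ∧ A ⊆ B) :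
    (u * pinv u) * w = w := by
  have hwnone : ∀ x, u.base x = none → w.fib x = none := by
    intro x hx
    rcases hwf : w.fib x with _ | g
    · rfl
    · exfalso
      obtain ⟨B, hB, -⟩ := hle x (pdomF g) (by simp [Dm, hwf])
      have : u.fib x = none := fib_none_of_base_none hx
      simp [Dm, this] at hB
  apply PW.ext'
  · apply PEquiv.ext
    intro x
    show ((u.base x).bind u.base.symm).bind w.base = w.base x
    rcases h1 : u.base x with _ | y
    · have := base_none_of_fib_none (hwnone x h1)
      simp [this]
    · have hs : u.base.symm y = some x := (PEquiv.eq_some_iff u.base).mpr h1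
      simp [hs]
  · funext x
    rcases h1 : u.base x with _ | y
    · have hf := fib_none_of_base_none h1
      have hw := hwnone x h1
      simp [PW.mul_fib, PW.mul_base, IS.mul_apply, h1, hf, hw]
    · obtain ⟨f, hf⟩ := fib_some_of_base_some h1
      have hs : u.base.symm y = some x := (PEquiv.eq_some_iff u.base).mpr h1
      have hpinv : (pinv u).fib y = some f.symm := by
        simp [pinv, hs, hf]
      have h2 : (u * pinv u).fib x = some (f * f.symm) := by
        show Option.map₂ (· * ·) (u.fib x) ((u.base x).bind (pinv u).fib)
            = some (f * f.symm)
        simp [h1, hf, hpinv]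
      have h3 : (u * pinv u).base x = some x := by
        show (u.base x).bind u.base.symm = some x
        simp [h1, hs]
      have hrfl : (u * pinv u * w).fib x
          = Option.map₂ (· * ·) ((u * pinv u).fib x) (((u * pinv u).base x).bind w.fib) := rfl
      rcases hwf : w.fib x with _ | g
      · rw [hrfl, h2, h3, Option.bind_some, hwf]
        rfl
      · obtain ⟨B, hB, hsub⟩ := hle x (pdomF g) (by simp [Dm, hwf])
        have hBf : B = pdomF f := by
          simp [Dm, hf] at hB
          exact hB.symm
        subst hBf
        have key : (f * f.symm) * g = g := by
          apply pid_trans (pid_self_trans_symm f)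
          intro w' hw'
          have hmem : w' ∈ pdomF f := hsub (by simp [pdomF, hw'])
          simp only [pdomF, Finset.mem_filter, Finset.mem_univ, true_and] at hmem
          obtain ⟨b, hb⟩ := Option.isSome_iff_exists.mp hmem
          have : (f w').bind f.symm = f.symm b := by rw [hb]; simp
          rw [(PEquiv.eq_some_iff f).mpr hb] at this
          show ((f w').bind f.symm).isSome
          rw [this]; simp
        rw [hrfl, h2, h3, Option.bind_some, hwf, Option.map₂_some_some, key]

lemma greenR_of_Dm_eq {u v : PW m n} (hD : Dm u = Dm v) : GreenR u v := by
  have key : ∀ (a b : PW m n), Dm a = Dm b → ∀ w, (∃ s, w = a * s) → ∃ s, w = b * s := by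
    intro a b hab w ⟨s, hws⟩
    refine ⟨pinv b * w, ?_⟩
    rw [← PW.mul_assoc]
    refine (absorb b w ?_).symm
    intro x A hA
    subst hws
    obtain ⟨B, hB, hsub⟩ := Dm_mul_le hA
    exact ⟨B, hab ▸ hB, hsub⟩
  apply Set.eq_of_subset_of_subset
  · intro w hw; exact key u v hD w hw
  · intro w hw; exact key v u hD.symm w hw

lemma Dm_eq_of_greenR {u v : PW m n} (h : GreenR u v) : Dm u = Dm v := by
  have hu : ∃ s, u = v * s := by
    have : u ∈ {w : PW m n | ∃ s, w = u * s} := ⟨1, (PW.mul_one' u).symm⟩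
    rw [h] at this
    exact this
  have hv : ∃ s, v = u * s := by
    have : v ∈ {w : PW m n | ∃ s, w = v * s} := ⟨1, (PW.mul_one' v).symm⟩
    rw [← h] at this
    exact this
  obtain ⟨s, hs⟩ := hu
  obtain ⟨t, ht⟩ := hv
  funext x
  rcases h1 : Dm u x with _ | A
  · rcases h2 : Dm v x with _ | B
    · rfl
    · exfalso
      have : Dm (u * t) x = some B := by rw [← ht]; exact h2
      obtain ⟨B', hB', -⟩ := Dm_mul_le this
      rw [h1] at hB'; cases hB'
  · have hvs : Dm (v * s) x = some A := by rw [← hs]; exact h1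
    obtain ⟨B, hB, hAB⟩ := Dm_mul_le hvs
    have hut : Dm (u * t) x = some B := by rw [← ht]; exact hB
    obtain ⟨A', hA', hBA⟩ := Dm_mul_le hut
    rw [h1] at hA'
    have hAA : A' = A := (Option.some_injective _ hA').symm
    subst hAA
    rw [hB]
    exact congrArg some (Finset.Subset.antisymm hAB hBA)

end Aux

section Aux2

variable {m n : ℕ}

lemma base_pid {e : PW m n} (he : e * e = e) {x y : Fin n} (h : e.base x = some y) : y = x :=
  pid_of_idem (congrArg PW.base he) h

lemma fib_idem {e : PW m n} (he : e * e = e) {x : Fin n} {f : IS m}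
    (h : e.fib x = some f) : f * f = f := by
  obtain ⟨y, hy⟩ := base_some_of_fib_some h
  have hyx : y = x := base_pid he hy
  rw [hyx] at hy
  have h2 : (e * e).fib x = e.fib x := by rw [he]
  have h3 : (e * e).fib x = some (f * f) := by
    show Option.map₂ (· * ·) (e.fib x) ((e.base x).bind e.fib) = some (f * f)
    rw [h, hy, Option.bind_some, h, Option.map₂_some_some]
  rw [h2, h] at h3
  exact (Option.some_injective _ h3).symm

lemma fib_pid {e : PW m n} (he : e * e = e) {x : Fin n} {f : IS m}
    (h : e.fib x = some f) : ∀ w z, f w = some z → z = w :=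
  fun _ _ hz => pid_of_idem (fib_idem he h) hz

lemma Ne_iff {e : PW m n} (he : e * e = e) (ζ : PW m n) :
    e * ζ = ζ ↔ ∀ x g, ζ.fib x = some g → ∃ f, e.fib x = some f ∧ pdomF g ⊆ pdomF f := by
  constructor
  · intro h x g hg
    have h1 : (e * ζ).fib x = some g := by rw [h]; exact hg
    have h1' : Option.map₂ (· * ·) (e.fib x) ((e.base x).bind ζ.fib) = some g := h1
    rcases hef : e.fib x with _ | f
    · rw [hef] at h1'; simp at h1'
    · rcases hb : (e.base x).bind ζ.fib with _ | g'
      · rw [hef, hb] at h1'; simp at h1'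
      · rw [hef, hb, Option.map₂_some_some] at h1'
        have hgg : g = f * g' := (Option.some_injective _ h1').symm
        refine ⟨f, rfl, ?_⟩
        subst hgg
        intro w hw
        simp only [pdomF, Finset.mem_filter, Finset.mem_univ, true_and] at hw ⊢
        have hwb : ((f w).bind g').isSome := hw
        rcases hfw : f w with _ | z
        · rw [hfw] at hwb; simp at hwb
        · simp [hfw]
  · intro hc
    apply PW.ext'
    · apply PEquiv.ext
      intro x
      show (e.base x).bind ζ.base = ζ.base x
      rcases hz : ζ.base x with _ | y
      · rcases hb : e.base x with _ | y'
        · simp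
        · rw [Option.bind_some, base_pid he hb]
          exact hz
      · obtain ⟨g, hg⟩ := fib_some_of_base_some hz
        obtain ⟨f, hf, -⟩ := hc x g hg
        obtain ⟨y', hy'⟩ := base_some_of_fib_some hf
        rw [base_pid he hy'] at hy'
        simp [hy', hz]
    · funext x
      show Option.map₂ (· * ·) (e.fib x) ((e.base x).bind ζ.fib) = ζ.fib x
      rcases hz : ζ.fib x with _ | g
      · rcases hb : e.base x with _ | y
        · simp [fib_none_of_base_none hb]
        · rw [Option.bind_some, base_pid he hb, hz]
          simp
      · obtain ⟨f, hf, hsub⟩ := hc x g hz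
        obtain ⟨y, hy⟩ := base_some_of_fib_some hf
        rw [base_pid he hy] at hy
        rw [hf, hy, Option.bind_some, hz, Option.map₂_some_some]
        congr 1
        apply pid_trans (fib_pid he hf)
        intro w hw
        have hmem : w ∈ pdomF f := hsub (by simp [pdomF, hw])
        simpa [pdomF] using hmem

/-- the condition cut out by `N_e`, in terms of the invariant `Dm`. -/
def QP {m n : ℕ} (e : PW m n) (x : Fin n) (o : Option (Finset (Fin m))) : Prop :=
  ∀ A, o = some A → ∃ B, Dm e x = some B ∧ A ⊆ B

lemma Ne_iff_Dm {e : PW m n} (he : e * e = e) (ζ : PW m n) :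
    e * ζ = ζ ↔ ∀ x, QP e x (Dm ζ x) := by
  rw [Ne_iff he]
  constructor
  · intro h x A hA
    obtain ⟨g, hg, hAg⟩ := Option.map_eq_some_iff.mp hA
    obtain ⟨f, hf, hsub⟩ := h x g hg
    exact ⟨pdomF f, by simp [Dm, hf], by rw [← hAg]; exact hsub⟩
  · intro h x g hg
    obtain ⟨B, hB, hsub⟩ := h x (pdomF g) (by simp [Dm, hg])
    obtain ⟨f, hf, hBf⟩ := Option.map_eq_some_iff.mp hB
    exact ⟨f, hf, by rw [hBf]; exact hsub⟩

/-- the identity partial bijection on a finset -/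
def idPE {m : ℕ} (A : Finset (Fin m)) : IS m := PEquiv.ofSet (↑A : Set (Fin m))

lemma idPE_apply {m : ℕ} (A : Finset (Fin m)) (w : Fin m) :
    idPE A w = if w ∈ A then some w else none := by
  show (if w ∈ (↑A : Set (Fin m)) then some w else none) = _
  simp

lemma pdomF_idPE {m : ℕ} (A : Finset (Fin m)) : pdomF (idPE A) = A := by
  ext w
  simp only [pdomF, Finset.mem_filter, Finset.mem_univ, true_and, idPE_apply]
  by_cases h : w ∈ A <;> simp [h]

/-- an element of the wreath product with a prescribed invariant -/
def mkPW (m n : ℕ) (d : Fin n → Option (Finset (Fin m))) : PW m n where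
  base := PEquiv.ofSet {x | (d x).isSome}
  fib := fun x => (d x).map idPE
  dom_eq := by
    intro x
    by_cases h : (d x).isSome
    · obtain ⟨A, hA⟩ := Option.isSome_iff_exists.mp h
      simp [PEquiv.ofSet, Set.mem_setOf_eq, hA]
    · have hA := Option.not_isSome_iff_eq_none.mp h
      simp [PEquiv.ofSet, Set.mem_setOf_eq, hA]

lemma Dm_mkPW (m n : ℕ) (d : Fin n → Option (Finset (Fin m))) : Dm (mkPW m n d) = d := by
  funext x
  show ((d x).map idPE).map pdomF = d x
  rcases h : d x with _ | A
  · simp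
  · simp [pdomF_idPE]

lemma card_QP_none {e : PW m n} {x : Fin n} (h : e.fib x = none) :
    Nat.card {o : Option (Finset (Fin m)) // QP e x o} = 1 := by
  have hDe : Dm e x = none := by simp [Dm, h]
  haveI : Unique {o : Option (Finset (Fin m)) // QP e x o} :=
    { default := ⟨none, fun A hA => by cases hA⟩
      uniq := by
        rintro ⟨_ | A, ho⟩
        · rfl
        · exfalso
          obtain ⟨B, hB, -⟩ := ho A rfl
          rw [hDe] at hB
          cases hB }
  exact Nat.card_unique

lemma card_QP_some {e : PW m n} {x : Fin n} {f : IS m} (h : e.fib x = some f) :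
    Nat.card {o : Option (Finset (Fin m)) // QP e x o} = 1 + 2 ^ (pdomF f).card := by
  have hDe : Dm e x = some (pdomF f) := by simp [Dm, h]
  have hequiv : {o : Option (Finset (Fin m)) // QP e x o} ≃
      Option {A : Finset (Fin m) // A ⊆ pdomF f} :=
    { toFun := fun o =>
        match o with
        | ⟨none, _⟩ => none
        | ⟨some A, ho⟩ => some ⟨A, by
            obtain ⟨B, hB, hsub⟩ := ho A rfl
            rw [hDe] at hB
            have hBC : B = pdomF f := (Option.some_injective _ hB).symm
            exact hBC ▸ hsub⟩
      invFun := fun o =>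
        match o with
        | none => ⟨none, fun A hA => by cases hA⟩
        | some ⟨A, hA⟩ => ⟨some A, fun A' hA' => ⟨pdomF f, hDe,
            (Option.some_injective _ hA') ▸ hA⟩⟩
      left_inv := by rintro ⟨_ | A, ho⟩ <;> rfl
      right_inv := by rintro (_ | ⟨A, hA⟩) <;> rfl }
  rw [Nat.card_congr hequiv, Nat.card_eq_fintype_card, Fintype.card_option]
  have hcard : Fintype.card {A : Finset (Fin m) // A ⊆ pdomF f} = 2 ^ (pdomF f).card := by
    rw [Fintype.card_congr (Equiv.subtypeEquivRight
      (fun A => (Finset.mem_powerset (s := A) (t := pdomF f)).symm))]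
    rw [Fintype.card_coe]
    exact Finset.card_powerset _
  rw [hcard, Nat.add_comm]

end Aux2

/-- for an idempotent `e = (f_e, a_e)` of `IS m ≀_p IS n`, with
`N_e = {ζ : e ζ = ζ}`, and any R-cross-section `R` of `IS m ≀_p IS n`,
`|N_e ∩ R| = ∏_{x ∈ dom a_e} (1 + 2^{|dom f_e(x)|})`. -/
theorem card_Ne_inter_rcross (m n : ℕ) (e : PW m n) (he : e * e = e)
    (R : Set (PW m n)) (hR : IsRCrossSection R) :
    Nat.card ↥({ζ : PW m n | e * ζ = ζ} ∩ R) =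
      ∏ x ∈ Finset.univ.filter (fun x : Fin n => (e.base x).isSome),
        (1 + 2 ^ ((e.fib x).elim 0
          (fun f => (Finset.univ.filter fun w : Fin m => (f w).isSome).card))) := by
  have hbij : Nat.card ↥({ζ : PW m n | e * ζ = ζ} ∩ R)
      = Nat.card {d : Fin n → Option (Finset (Fin m)) // ∀ x, QP e x (d x)} := by
    apply Nat.card_congr
    refine Equiv.ofBijective
      (fun ζ => ⟨Dm ζ.1, (Ne_iff_Dm he ζ.1).mp ζ.2.1⟩) ⟨?_, ?_⟩
    · rintro ⟨ζ, hζ⟩ ⟨ζ', hζ'⟩ hEq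
      have hD : Dm ζ = Dm ζ' := congrArg Subtype.val hEq
      obtain ⟨t, -, huniq⟩ := hR.2 ζ
      have h1 : ζ = t := huniq ζ ⟨hζ.2, rfl⟩
      have h2 : ζ' = t := huniq ζ' ⟨hζ'.2, greenR_of_Dm_eq hD⟩
      exact Subtype.ext (h1.trans h2.symm)
    · rintro ⟨d, hd⟩
      obtain ⟨t, ⟨htR, htG⟩, -⟩ := hR.2 (mkPW m n d)
      have hdt : Dm t = d := by
        rw [← Dm_eq_of_greenR htG, Dm_mkPW]
      refine ⟨⟨t, ⟨?_, htR⟩⟩, Subtype.ext hdt⟩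
      exact (Ne_iff_Dm he t).mpr (by rw [hdt]; exact hd)
  rw [hbij, Nat.card_congr (Equiv.subtypePiEquivPi), Nat.card_pi, Finset.prod_filter]
  apply Finset.prod_congr rfl
  intro x _
  rcases hef : e.fib x with _ | f
  · have hb : e.base x = none := base_none_of_fib_none hef
    rw [if_neg (by simp [hb]), card_QP_none hef]
  · obtain ⟨y, hy⟩ := base_some_of_fib_some hef
    rw [if_pos (by simp [hy]), card_QP_some hef]
    rfl

end ISW
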